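/- For every integer n ≥ 1, 2·B_{2n}/(2n) = 1/(2n) + ∑_{i=1}^{n} (−1)^{i} · 2 · S_i(n) · (2n−1)!/(2n+i)!, i.e. the i-th term's denominator is the product (2n)(2n+1)⋯(2n+i). -/

import Mathlib

open Finset

def S : ℕ → ℕ → ℚ
  | 0, _ => 0
  | 1, n => 1 + (1 / 2) * ∑ l ∈ Finset.Ico 1 n, (Nat.choose (2 * n + 1) (2 * l) : ℚ)
  | (i + 2), n =>
      ∑ k ∈ Finset.Ico (i + 1) n, (Nat.choose (2 * n + (i + 1) + 1) (2 * k + (i + 1)) : ℚ) *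
        S (i + 1) k

lemma bernoulli_odd_zero {m : ℕ} (h : Odd m) (h1 : 1 < m) : bernoulli m = 0 := by
  rw [bernoulli_eq_bernoulli'_of_ne_one (by omega), bernoulli'_eq_zero_of_odd h h1]

lemma sum_split (f : ℕ → ℚ) (n : ℕ) :
    ∑ k ∈ range (2*n+1), f k = ∑ j ∈ range (n+1), f (2*j) + ∑ j ∈ range n, f (2*j+1) := by
  induction n with
  | zero => simp
  | succ n ih =>
    have e : 2 * (n+1) + 1 = (2*n+1) + 1 + 1 := by ring
    rw [e, sum_range_succ, sum_range_succ, ih]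
    simp only [sum_range_succ]
    have e2 : 2*n+1+1 = 2*(n+1) := by ring
    rw [e2]
    ring

lemma bernoulli_rec (n : ℕ) (hn : 1 ≤ n) :
    (2*(n:ℚ)+1) * bernoulli (2*n)
      = (2*(n:ℚ)-1)/2 - ∑ k ∈ Ico 1 n, ((2*n+1).choose (2*k) : ℚ) * bernoulli (2*k) := by
  have h0 := sum_bernoulli (2*n+1)
  rw [if_neg (by omega)] at h0
  rw [sum_split (fun k => ((2*n+1).choose k : ℚ) * bernoulli k) n] at h0
  have hodd : ∑ j ∈ range n, ((2*n+1).choose (2*j+1) : ℚ) * bernoulli (2*j+1)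
      = -(2*(n:ℚ)+1)/2 := by
    rw [Finset.sum_eq_single_of_mem 0 (mem_range.mpr (by omega))]
    · simp [bernoulli_one]; push_cast; ring
    · intro j _ hj0
      rw [bernoulli_odd_zero (odd_two_mul_add_one j) (by omega), mul_zero]
  have hcs : (2*n+1).choose (2*n) = 2*n+1 := by
    simpa using Nat.choose_symm (show 1 ≤ 2*n+1 by omega)
  have heven : ∑ j ∈ range (n+1), ((2*n+1).choose (2*j) : ℚ) * bernoulli (2*j)
      = 1 + (∑ k ∈ Ico 1 n, ((2*n+1).choose (2*k) : ℚ) * bernoulli (2*k))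
        + (2*(n:ℚ)+1) * bernoulli (2*n) := by
    rw [sum_range_succ, range_eq_Ico, Finset.sum_eq_sum_Ico_succ_bot hn]
    simp only [hcs]
    push_cast
    ring_nf
    simp
  rw [heven, hodd] at h0
  linarith

lemma key_ratio (n k j : ℕ) (hk : 1 ≤ k) (hkn : k < n) :
    ((2*n+1).choose (2*k) : ℚ) * k * ((2*k-1).factorial) * ((2*n+j+1).factorial)
      = (n:ℚ) * (2*n+1) * ((2*n-1).factorial) * ((2*n+j+1).choose (2*k+j)) * ((2*k+j).factorial) := by
  obtain ⟨a, rfl⟩ : ∃ a, n = a+1 := ⟨n-1, by omega⟩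
  obtain ⟨c, rfl⟩ : ∃ c, k = c+1 := ⟨k-1, by omega⟩
  have e1 : 2*(a+1)-1 = 2*a+1 := by omega
  have e2 : 2*(c+1)-1 = 2*c+1 := by omega
  rw [e1, e2, Nat.cast_choose ℚ (show 2*(c+1) ≤ 2*(a+1)+1 by omega),
      Nat.cast_choose ℚ (show 2*(c+1)+j ≤ 2*(a+1)+j+1 by omega)]
  have e3 : 2*(a+1)+1-2*(c+1) = 2*(a-c)+1 := by omega
  have e4 : 2*(a+1)+j+1-(2*(c+1)+j) = 2*(a-c)+1 := by omega
  rw [e3, e4]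
  have f1 : ((2*(a+1)+1).factorial : ℚ) = (2*(a:ℚ)+3)*(2*a+2)*((2*a+1).factorial) := by
    rw [show 2*(a+1)+1 = (2*a+1)+1+1 by ring, Nat.factorial_succ, Nat.factorial_succ]
    push_cast; ring
  have f2 : ((2*(c+1)).factorial : ℚ) = (2*(c:ℚ)+2)*((2*c+1).factorial) := by
    rw [show 2*(c+1) = (2*c+1)+1 by ring, Nat.factorial_succ]
    push_cast; ring
  rw [f1, f2]
  have n1 : ((2*a+1).factorial : ℚ) ≠ 0 := Nat.cast_ne_zero.mpr (Nat.factorial_ne_zero _)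
  have n2 : ((2*c+1).factorial : ℚ) ≠ 0 := Nat.cast_ne_zero.mpr (Nat.factorial_ne_zero _)
  have n3 : ((2*(a-c)+1).factorial : ℚ) ≠ 0 := Nat.cast_ne_zero.mpr (Nat.factorial_ne_zero _)
  have n4 : ((2*(c+1)+j).factorial : ℚ) ≠ 0 := Nat.cast_ne_zero.mpr (Nat.factorial_ne_zero _)
  field_simp
  push_cast
  ring

def T (n i : ℕ) : ℚ :=
  (-1) ^ i * 2 * S i n * (Nat.factorial (2 * n - 1) : ℚ) / (Nat.factorial (2 * n + i) : ℚ)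

lemma Dsum (n : ℕ) (hn : 1 ≤ n) :
    ∑ k ∈ Ico 1 n, ((2*n+1).choose (2*k) : ℚ) * k * (∑ j ∈ Icc 1 k, T k j)
      = -((n:ℚ) * (2*n+1)) * ∑ i ∈ Icc 2 n, T n i := by
  -- turn Icc into Ico and swap the triangular sum
  have lhs_eq : ∑ k ∈ Ico 1 n, ((2*n+1).choose (2*k) : ℚ) * k * (∑ j ∈ Icc 1 k, T k j)
      = ∑ j ∈ Ico 1 n, ∑ k ∈ Ico j n, ((2*n+1).choose (2*k) : ℚ) * k * T k j := by
    rw [sum_Ico_Ico_comm 1 n (fun j k => ((2*n+1).choose (2*k) : ℚ) * k * T k j)]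
    refine Finset.sum_congr rfl fun k _ => ?_
    rw [← Finset.Ico_add_one_right_eq_Icc, mul_sum]
  rw [lhs_eq]
  -- rewrite RHS as a sum over Ico 1 n with index shift
  have rhs_eq : ∑ i ∈ Icc 2 n, T n i = ∑ j ∈ Ico 1 n, T n (j+1) := by
    rw [← Finset.Ico_add_one_right_eq_Icc, Finset.sum_Ico_eq_sum_range, Finset.sum_Ico_eq_sum_range]
    have : n + 1 - 2 = n - 1 := by omega
    rw [this]
    refine Finset.sum_congr rfl fun m _ => ?_
    congr 1
    omega
  rw [rhs_eq, mul_sum]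
  refine Finset.sum_congr rfl fun j hj => ?_
  simp only [mem_Ico] at hj
  obtain ⟨i, rfl⟩ : ∃ i, j = i+1 := ⟨j-1, by omega⟩
  -- unfold S (i+2) n
  have hS : S (i+1+1) n = ∑ k ∈ Finset.Ico (i + 1) n,
      (Nat.choose (2 * n + (i + 1) + 1) (2 * k + (i + 1)) : ℚ) * S (i + 1) k := rfl
  have hT : T n (i+1+1) = ∑ k ∈ Finset.Ico (i+1) n,
      (-1)^(i+1+1) * 2 * ((Nat.choose (2 * n + (i + 1) + 1) (2 * k + (i + 1)) : ℚ) * S (i + 1) k)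
        * (Nat.factorial (2 * n - 1) : ℚ) / (Nat.factorial (2 * n + (i+1+1)) : ℚ) := by
    rw [T, hS, mul_sum, sum_mul, sum_div]
  rw [hT, mul_sum]
  refine Finset.sum_congr rfl fun k hk => ?_
  simp only [mem_Ico] at hk
  have key := key_ratio n k (i+1) (by omega) hk.2
  rw [T]
  have n1 : ((2*k+(i+1)).factorial : ℚ) ≠ 0 := Nat.cast_ne_zero.mpr (Nat.factorial_ne_zero _)
  have n2 : ((2*n+(i+1+1)).factorial : ℚ) ≠ 0 := Nat.cast_ne_zero.mpr (Nat.factorial_ne_zero _)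
  simp only [show 2*n+(i+1)+1 = 2*n+i+1+1 from by ring, show 2*k+(i+1) = 2*k+i+1 from by ring,
    show 2*n+(i+1+1) = 2*n+i+1+1 from by ring] at key n1 n2 ⊢
  field_simp
  linear_combination (-(-1:ℚ)^i * S (i+1) k) * key

lemma main : ∀ n : ℕ, 1 ≤ n →
    2 * bernoulli (2 * n) / (2 * n) = 1 / (2 * n) + ∑ i ∈ Finset.Icc 1 n, T n i := by
  intro n
  induction n using Nat.strong_induction_on with
  | _ n ih =>
    intro hn
    have hn0 : ((n:ℚ)) ≠ 0 := Nat.cast_ne_zero.mpr (by omega)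
    have h2n1 : (2*(n:ℚ)+1) ≠ 0 := by positivity
    have hrec := bernoulli_rec n hn
    have hBk : ∀ k ∈ Ico 1 n, bernoulli (2*k) = 1/2 + (k:ℚ) * ∑ j ∈ Icc 1 k, T k j := by
      intro k hk
      simp only [mem_Ico] at hk
      have h := ih k hk.2 hk.1
      have hk0 : ((k:ℚ)) ≠ 0 := Nat.cast_ne_zero.mpr (by omega)
      have hb : bernoulli (2*k) = (2 * bernoulli (2*k) / (2*(k:ℚ))) * k := by
        field_simp
      rw [hb, h]
      field_simp
    have hsum : ∑ k ∈ Ico 1 n, ((2*n+1).choose (2*k):ℚ) * bernoulli (2*k)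
        = (∑ k ∈ Ico 1 n, ((2*n+1).choose (2*k):ℚ))/2
          + ∑ k ∈ Ico 1 n, ((2*n+1).choose (2*k):ℚ) * k * (∑ j ∈ Icc 1 k, T k j) := by
      rw [Finset.sum_div, ← Finset.sum_add_distrib]
      refine Finset.sum_congr rfl fun k hk => ?_
      rw [hBk k hk]; ring
    rw [hsum, Dsum n hn] at hrec
    have hsplit : ∑ i ∈ Icc 1 n, T n i = T n 1 + ∑ i ∈ Icc 2 n, T n i := by
      rw [← Finset.Ico_add_one_right_eq_Icc, Finset.sum_eq_sum_Ico_succ_bot (by omega), Finset.Ico_add_one_right_eq_Icc]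
    have hfact : ((2*n+1).factorial : ℚ) = (2*(n:ℚ)+1)*(2*n)*((2*n-1).factorial) := by
      obtain ⟨a, rfl⟩ : ∃ a, n = a+1 := ⟨n-1, by omega⟩
      rw [show 2*(a+1)-1 = 2*a+1 by omega, show 2*(a+1)+1 = (2*a+1)+1+1 by ring,
        Nat.factorial_succ, Nat.factorial_succ]
      push_cast; ring
    have hF : ((2*n-1).factorial : ℚ) ≠ 0 := Nat.cast_ne_zero.mpr (Nat.factorial_ne_zero _)
    have hT1 : T n 1 = -(2 * S 1 n) / ((2*(n:ℚ)+1)*(2*n)) := by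
      rw [T, hfact]
      rw [pow_one]
      field_simp
    have hS1 : S 1 n = 1 + (1/2) * ∑ l ∈ Ico 1 n, ((2*n+1).choose (2*l) : ℚ) := rfl
    rw [hsplit, hT1, hS1]
    field_simp
    linear_combination (2:ℚ) * hrec

theorem two_bernoulli_div_eq_sum_S (n : ℕ) (hn : 1 ≤ n) :
    2 * bernoulli (2 * n) / (2 * n) =
      1 / (2 * n) + ∑ i ∈ Finset.Icc 1 n,
        (-1 : ℚ) ^ i * 2 * S i n * (Nat.factorial (2 * n - 1) : ℚ) /
          (Nat.factorial (2 * n + i) : ℚ) := by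
  simpa only [T] using main n hn
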